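/- Let A = [[1,2],[3,4]] over the localization ℤ₍₂₎ of ℤ at the prime 2. Then A has no generalized Hirano inverse in M₂(ℤ₍₂₎). -/

import Mathlib

/-- `a` is quasinilpotent: `1 + a*x` is a unit for every `x` commuting with `a`. -/
def IsQuasinilpotent {R : Type*} [Ring R] (a : R) : Prop :=
  ∀ x : R, x * a = a * x → IsUnit (1 + a * x)

/-- `x` lies in the double commutant of `a`. -/
def InDoubleCommutant {R : Type*} [Ring R] (a x : R) : Prop :=
  ∀ y : R, y * a = a * y → x * y = y * x

/-- `b` is a generalized Hirano inverse of `a`. -/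
def IsGHInverse {R : Type*} [Ring R] (a b : R) : Prop :=
  b * a * b = b ∧ InDoubleCommutant a b ∧ IsQuasinilpotent (a ^ 2 - a * b)

instance : (Ideal.span {(2 : ℤ)}).IsPrime := by
  rw [Ideal.span_singleton_prime (by norm_num)]
  exact Int.prime_two

local notation "R2" => Localization.AtPrime (Ideal.span {(2 : ℤ)})

lemma aux_int33 : ∀ n : ℕ, ∀ a b : ℤ, b.natAbs ≤ n → a ^ 2 = 33 * b ^ 2 → a = 0 ∧ b = 0 := by
  intro n
  induction n with
  | zero =>
    intro a b hb h
    have hb0 : b = 0 := by omega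
    subst hb0
    refine ⟨?_, rfl⟩
    have : a ^ 2 = 0 := by linarith
    exact pow_eq_zero_iff (n := 2) (by norm_num) |>.mp this
  | succ n ih =>
    intro a b hb h
    by_cases hb0 : b = 0
    · subst hb0
      refine ⟨?_, rfl⟩
      have : a ^ 2 = 0 := by linarith
      exact pow_eq_zero_iff (n := 2) (by norm_num) |>.mp this
    · have hp3 : Prime (3 : ℤ) := Int.prime_three
      have h3a : (3 : ℤ) ∣ a := by
        have : (3 : ℤ) ∣ a * a := ⟨11 * b ^ 2, by linear_combination h⟩
        rcases hp3.dvd_mul.mp this with h' | h' <;> exact h'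
      obtain ⟨c, rfl⟩ := h3a
      have h2 : 3 * c ^ 2 = 11 * b ^ 2 := by nlinarith [h]
      have h3b : (3 : ℤ) ∣ b := by
        have : (3 : ℤ) ∣ b * b := by
          have h11 : (3 : ℤ) ∣ 11 * (b * b) := ⟨c ^ 2, by linear_combination -h2⟩
          rcases hp3.dvd_mul.mp h11 with h' | h'
          · norm_num at h'
          · exact h'
        rcases hp3.dvd_mul.mp this with h' | h' <;> exact h'
      obtain ⟨d, rfl⟩ := h3b
      have h4 : c ^ 2 = 33 * d ^ 2 := by nlinarith
      have hd : d.natAbs ≤ n := by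
        have h1 : (3 * d).natAbs = 3 * d.natAbs := by
          simp [Int.natAbs_mul]
        have h2' : d ≠ 0 := fun hh => hb0 (by simp [hh])
        have : 1 ≤ d.natAbs := Int.natAbs_pos.mpr h2'
        omega
      obtain ⟨hc0, hd0⟩ := ih c d hd h4
      exact ⟨by simp [hc0], by simp [hd0]⟩

lemma aux_inj : Function.Injective (algebraMap ℤ R2) :=
  IsLocalization.injective (M := (Ideal.span {(2:ℤ)}).primeCompl) R2
    (Ideal.primeCompl_le_nonZeroDivisors _)

lemma aux_charzero : CharZero R2 := charZero_of_injective_algebraMap aux_inj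

lemma aux_domain : IsDomain R2 :=
  IsLocalization.isDomain_localization (Ideal.primeCompl_le_nonZeroDivisors _)

lemma aux_sq33 (x y : R2) (h : x ^ 2 = 33 * y ^ 2) : x = 0 ∧ y = 0 := by
  haveI := aux_domain
  obtain ⟨⟨a, s⟩, hx⟩ := IsLocalization.surj (Ideal.span {(2:ℤ)}).primeCompl x
  obtain ⟨⟨b, t⟩, hy⟩ := IsLocalization.surj (Ideal.span {(2:ℤ)}).primeCompl y
  set f := algebraMap ℤ R2 with hf
  have key : f ((a * (t : ℤ)) ^ 2) = f (33 * (b * (s : ℤ)) ^ 2) := by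
    push_cast [map_mul, map_pow]
    rw [← hx, ← hy]
    push_cast [map_mul, map_pow]
    have h33 : f (33 : ℤ) = (33 : R2) := by
      rw [eq_intCast]; norm_num
    rw [h33]
    linear_combination (f (s : ℤ)) ^ 2 * (f (t : ℤ)) ^ 2 * h
  have keyZ : (a * (t : ℤ)) ^ 2 = 33 * (b * (s : ℤ)) ^ 2 := aux_inj key
  obtain ⟨h1, h2⟩ := aux_int33 _ _ _ le_rfl keyZ
  have hs0 : (s : ℤ) ≠ 0 := fun hh => s.2 (by rw [hh]; exact Ideal.zero_mem _)
  have ht0 : (t : ℤ) ≠ 0 := fun hh => t.2 (by rw [hh]; exact Ideal.zero_mem _)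
  have ha : a = 0 := by
    rcases mul_eq_zero.mp h1 with h' | h'
    · exact h'
    · exact absurd h' ht0
  have hb : b = 0 := by
    rcases mul_eq_zero.mp h2 with h' | h'
    · exact h'
    · exact absurd h' hs0
  have hfs : f (s : ℤ) ≠ 0 := fun hh => hs0 (aux_inj (by rw [hh, map_zero]))
  have hft : f (t : ℤ) ≠ 0 := fun hh => ht0 (aux_inj (by rw [hh, map_zero]))
  constructor
  · have := hx
    rw [ha, map_zero] at this
    rcases mul_eq_zero.mp this with h' | h'
    · exact h'
    · exact absurd h' hfs
  · have := hy
    rw [hb, map_zero] at this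
    rcases mul_eq_zero.mp this with h' | h'
    · exact h'
    · exact absurd h' hft

lemma aux_two_not_unit : ¬ IsUnit (2 : R2) := by
  have := (IsLocalization.AtPrime.isUnit_to_map_iff R2 (Ideal.span {(2:ℤ)}) (2 : ℤ))
  rw [eq_intCast] at this
  intro h
  have h2 : (2:ℤ) ∈ (Ideal.span {(2:ℤ)}).primeCompl := this.mp (by exact_mod_cast h)
  exact h2 (Ideal.mem_span_singleton_self 2)

lemma aux_three_unit : IsUnit (3 : R2) := by
  have := (IsLocalization.AtPrime.isUnit_to_map_iff R2 (Ideal.span {(2:ℤ)}) (3 : ℤ))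
  rw [eq_intCast] at this
  have h3 : (3:ℤ) ∈ (Ideal.span {(2:ℤ)}).primeCompl := by
    intro h
    have : (2:ℤ) ∣ 3 := Ideal.mem_span_singleton.mp h
    omega
  exact_mod_cast this.mpr h3

theorem stmt10 :
    ¬ ∃ B, IsGHInverse
      (!![1, 2; 3, 4] : Matrix (Fin 2) (Fin 2) (Localization.AtPrime (Ideal.span {(2 : ℤ)})))
      B := by
  haveI := aux_domain
  haveI := aux_charzero
  rintro ⟨B, hbab, hcomm, hq⟩
  set A : Matrix (Fin 2) (Fin 2) R2 := !![1, 2; 3, 4] with hA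
  obtain ⟨u, hu⟩ := aux_three_unit
  set t : R2 := ↑u⁻¹ with htdef
  have ht : (3 : R2) * t = 1 := by rw [← hu, htdef, Units.mul_inv]
  -- B commutes with A
  have hBA : B * A = A * B := hcomm A rfl
  set p := B 0 0 with hp
  set q := B 0 1 with hqd
  set r := B 1 0 with hr
  set s := B 1 1 with hsd
  have hB : B = !![p, q; r, s] := Matrix.eta_fin_two B
  rw [hB, hA, Matrix.mul_fin_two, Matrix.mul_fin_two] at hBA
  have e00 : p * 1 + q * 3 = 1 * p + 2 * r := by
    simpa using congrFun (congrFun hBA 0) 0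
  have e10 : r * 1 + s * 3 = 3 * p + 4 * r := by
    simpa using congrFun (congrFun hBA 1) 0
  -- solve for q and s
  have hqv : q = 2 * t * r := by linear_combination t * e00 - q * ht
  have hsv : s = p + r := by linear_combination t * e10 - (s - p - r) * ht
  -- key determinant equation
  have hzero : B * (A * B - 1) = 0 := by
    rw [mul_sub, mul_one, ← mul_assoc, hbab, sub_self]
  have hdet : B.det * (A * B - 1).det = 0 := by
    rw [← Matrix.det_mul, hzero, Matrix.det_zero]
  have h2ne : (2 : R2) ≠ 0 := by norm_num
  rcases mul_eq_zero.mp hdet with hd | hd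
  · -- det B = 0, show B = 0 and contradict quasinilpotency of A²
    rw [hB, Matrix.det_fin_two_of] at hd
    have h33 : (6 * p + 3 * r) ^ 2 = 33 * r ^ 2 := by
      rw [hqv, hsv] at hd
      linear_combination 36 * hd + 24 * r ^ 2 * ht
    obtain ⟨hx0, hr0⟩ := aux_sq33 _ _ h33
    have hp0 : p = 0 := by
      have h6 : (6 : R2) * p = 0 := by rw [hr0] at hx0; linear_combination hx0
      rcases mul_eq_zero.mp h6 with h' | h'
      · exact absurd h' (by norm_num)
      · exact h'
    have hq0 : q = 0 := by rw [hqv, hr0, mul_zero]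
    have hs0 : s = 0 := by rw [hsv, hp0, hr0, add_zero]
    have hB0 : B = 0 := by
      rw [hB, hp0, hq0, hr0, hs0]
      ext i j
      fin_cases i <;> fin_cases j <;> simp
    have hQN := hq 1 (by rw [one_mul, mul_one])
    rw [hB0, mul_zero, sub_zero, mul_one] at hQN
    have hDet : IsUnit ((1 + A ^ 2).det) := (Matrix.isUnit_iff_isUnit_det _).mp hQN
    have hval : (1 + A ^ 2) = !![8, 10; 15, 23] := by
      rw [hA, pow_two, Matrix.mul_fin_two, Matrix.one_fin_two]
      ext i j
      fin_cases i <;> fin_cases j <;> norm_num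
    rw [hval, Matrix.det_fin_two_of] at hDet
    have h34 : IsUnit ((2 : R2) * 17) := by
      have : (8 : R2) * 23 - 10 * 15 = 2 * 17 := by norm_num
      rwa [this] at hDet
    exact aux_two_not_unit (isUnit_of_mul_isUnit_left h34)
  · -- det (AB - 1) = 0
    have hABm : A * B - 1 = !![p + 2*r - 1, q + 2*s; 3*p + 4*r, 3*q + 4*s - 1] := by
      rw [hA, hB, Matrix.mul_fin_two, Matrix.one_fin_two]
      ext i j
      fin_cases i <;> fin_cases j <;> simp
    rw [hABm, Matrix.det_fin_two_of] at hd
    have h33 : (15 * p + 24 * r - 6) ^ 2 = 33 * (3 * p + 4 * r) ^ 2 := by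
      rw [hqv, hsv] at hd
      linear_combination 36 * hd + (-48 * r ^ 2 + 72 * r) * ht
    obtain ⟨hx0, hy0⟩ := aux_sq33 _ _ h33
    have h2r : (2 : R2) * (2 * r - 3) = 0 := by linear_combination hx0 - 5 * hy0
    have hr32 : 2 * r - 3 = 0 := by
      rcases mul_eq_zero.mp h2r with h' | h'
      · exact absurd h' h2ne
      · exact h'
    have : IsUnit (2 : R2) := IsUnit.of_mul_eq_one (r * t) (by
      linear_combination t * hr32 + ht)
    exact aux_two_not_unit this
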